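/- arXiv:2006.09219 — 3 statements merged into one kernel-verified Lean document; each statement's English description precedes it below -/
import Mathlib

section
/- For each fixed real y, the vector of IDR fitted probabilities (F̂_{ϑ_1}(y),...,F̂_{ϑ_m}(y)) given by the isotonic min-max formula applied to z_i = 1{y_i ≤ y} defines, as y varies, genuine CDF values: each component y ↦ F̂_{ϑ_j}(y) is a nondecreasing, right-continuous step function taking values in [0,1] that equals 0 for y below min_i y_i and 1 for y ≥ max_i y_i. -/
/-- The IDR fitted probability at design point j and threshold t, given by the isotonic
min-max formula applied to the indicators 1{y_i ≤ t}. -/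
noncomputable def idrFit {m : ℕ} (y : Fin m → ℝ) (j : Fin m) (t : ℝ) : ℝ :=
  (Finset.Iic j).inf' ⟨j, Finset.mem_Iic.mpr le_rfl⟩ (fun r =>
    (Finset.Ici j).sup' ⟨j, Finset.mem_Ici.mpr le_rfl⟩ (fun s =>
      (∑ i ∈ Finset.Icc r s, if y i ≤ t then (1:ℝ) else 0) /
        (((s : ℕ) - (r : ℕ) + 1 : ℕ) : ℝ)))

section Aux

variable {m : ℕ}

private lemma idr_denom_pos (r s : Fin m) : (0:ℝ) < (((s : ℕ) - (r : ℕ) + 1 : ℕ) : ℝ) := by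
  have : 0 < (s : ℕ) - (r : ℕ) + 1 := by omega
  exact_mod_cast this

/-- The elementary term in the min-max formula. -/
private noncomputable def idrTerm (y : Fin m → ℝ) (r s : Fin m) (t : ℝ) : ℝ :=
  (∑ i ∈ Finset.Icc r s, if y i ≤ t then (1:ℝ) else 0) /
    (((s : ℕ) - (r : ℕ) + 1 : ℕ) : ℝ)

private lemma idrTerm_nonneg (y : Fin m → ℝ) (r s : Fin m) (t : ℝ) :
    0 ≤ idrTerm y r s t := by
  apply div_nonneg _ (idr_denom_pos r s).le
  apply Finset.sum_nonneg
  intro i _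
  split <;> norm_num

private lemma idrTerm_le_one (y : Fin m → ℝ) (r s : Fin m) (t : ℝ) :
    idrTerm y r s t ≤ 1 := by
  rw [idrTerm, div_le_one (idr_denom_pos r s)]
  calc (∑ i ∈ Finset.Icc r s, if y i ≤ t then (1:ℝ) else 0)
      ≤ ∑ i ∈ Finset.Icc r s, (1:ℝ) := by
        apply Finset.sum_le_sum; intro i _; split <;> norm_num
    _ = ((Finset.Icc r s).card : ℝ) := by simp
    _ ≤ (((s : ℕ) - (r : ℕ) + 1 : ℕ) : ℝ) := by
        rw [Fin.card_Icc]
        have : (s : ℕ) + 1 - (r : ℕ) ≤ (s : ℕ) - (r : ℕ) + 1 := by omega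
        exact_mod_cast this

private lemma idrTerm_mono (y : Fin m → ℝ) (r s : Fin m) : Monotone (idrTerm y r s) := by
  intro a b hab
  apply div_le_div_of_nonneg_right _ (idr_denom_pos r s).le
  apply Finset.sum_le_sum
  intro i _
  split_ifs with h1 h2
  · exact le_refl 1
  · exact absurd (h1.trans hab) h2
  · norm_num
  · exact le_refl 0

private lemma idrTerm_congr (y : Fin m → ℝ) (r s : Fin m) {a b : ℝ}
    (h : ∀ i, y i ≤ a ↔ y i ≤ b) : idrTerm y r s a = idrTerm y r s b := by
  unfold idrTerm
  congr 1
  apply Finset.sum_congr rfl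
  intro i _
  simp [h i]

private lemma idrFit_eq (y : Fin m → ℝ) (j : Fin m) (t : ℝ) :
    idrFit y j t = (Finset.Iic j).inf' ⟨j, Finset.mem_Iic.mpr le_rfl⟩ (fun r =>
      (Finset.Ici j).sup' ⟨j, Finset.mem_Ici.mpr le_rfl⟩ (fun s => idrTerm y r s t)) := rfl

private lemma idrFit_congr (y : Fin m → ℝ) (j : Fin m) {a b : ℝ}
    (h : ∀ i, y i ≤ a ↔ y i ≤ b) : idrFit y j a = idrFit y j b := by
  rw [idrFit_eq, idrFit_eq]
  apply Finset.inf'_congr _ rfl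
  intro r _
  apply Finset.sup'_congr _ rfl
  intro s _
  exact idrTerm_congr y r s h

/-- The fitted value only depends on the set of indices with `y i ≤ t`. -/
private noncomputable def idrAuxF (y : Fin m → ℝ) (j : Fin m) (A : Finset (Fin m)) : ℝ :=
  (Finset.Iic j).inf' ⟨j, Finset.mem_Iic.mpr le_rfl⟩ (fun r =>
    (Finset.Ici j).sup' ⟨j, Finset.mem_Ici.mpr le_rfl⟩ (fun s =>
      (∑ i ∈ Finset.Icc r s, if i ∈ A then (1:ℝ) else 0) /
        (((s : ℕ) - (r : ℕ) + 1 : ℕ) : ℝ)))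

private lemma idrFit_eq_aux (y : Fin m → ℝ) (j : Fin m) (t : ℝ) :
    idrFit y j t = idrAuxF y j (Finset.univ.filter (fun i => y i ≤ t)) := by
  classical
  unfold idrFit idrAuxF
  apply Finset.inf'_congr _ rfl
  intro r _
  apply Finset.sup'_congr _ rfl
  intro s _
  congr 1
  apply Finset.sum_congr rfl
  intro i _
  simp

end Aux

/-- For each design point, the IDR fitted probabilities define a genuine CDF as the
threshold varies: nondecreasing, right-continuous, a step function (finite range) with
values in [0,1], equal to 0 below min_i y_i and to 1 from max_i y_i on. -/
theorem stmt_8 {m : ℕ} (hm : 0 < m) (ϑ : Fin m → ℝ) (hϑ : StrictMono ϑ)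
    (y : Fin m → ℝ) :
    ∀ j : Fin m,
      Monotone (idrFit y j) ∧
      (∀ t : ℝ, idrFit y j t ∈ Set.Icc (0:ℝ) 1) ∧
      (∀ t : ℝ, ContinuousWithinAt (idrFit y j) (Set.Ici t) t) ∧
      (Set.range (idrFit y j)).Finite ∧
      (∀ t : ℝ, t < Finset.univ.inf' ⟨⟨0, hm⟩, Finset.mem_univ _⟩ y → idrFit y j t = 0) ∧
      (∀ t : ℝ, Finset.univ.sup' ⟨⟨0, hm⟩, Finset.mem_univ _⟩ y ≤ t → idrFit y j t = 1) := by
  classical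
  intro j
  have hIic : (Finset.Iic j).Nonempty := ⟨j, Finset.mem_Iic.mpr le_rfl⟩
  have hIci : (Finset.Ici j).Nonempty := ⟨j, Finset.mem_Ici.mpr le_rfl⟩
  -- Monotonicity
  have hmono : Monotone (idrFit y j) := by
    intro a b hab
    rw [idrFit_eq, idrFit_eq]
    apply Finset.le_inf'
    intro r hr
    refine le_trans (Finset.inf'_le _ hr) ?_
    apply Finset.sup'_mono_fun
    intro s _
    exact idrTerm_mono y r s hab
  -- Values in [0,1]
  have hmem : ∀ t : ℝ, idrFit y j t ∈ Set.Icc (0:ℝ) 1 := by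
    intro t
    constructor
    · rw [idrFit_eq]
      apply Finset.le_inf'
      intro r _
      exact le_trans (idrTerm_nonneg y r j t)
        (Finset.le_sup' (f := fun s => idrTerm y r s t) (Finset.mem_Ici.mpr le_rfl))
    · rw [idrFit_eq]
      refine le_trans (Finset.inf'_le _ (Finset.mem_Iic.mpr (le_refl j))) ?_
      apply Finset.sup'_le
      intro s _
      exact idrTerm_le_one y j s t
  -- local constancy to the right
  have hloc : ∀ t : ℝ, ∃ δ > (0:ℝ), ∀ x, t ≤ x → x < t + δ → idrFit y j x = idrFit y j t := by
    intro t
    by_cases h : (Finset.univ.filter (fun i => t < y i)).Nonempty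
    · refine ⟨(Finset.univ.filter (fun i => t < y i)).inf' h y - t, ?_, ?_⟩
      · have : t < (Finset.univ.filter (fun i => t < y i)).inf' h y := by
          rw [Finset.lt_inf'_iff]
          intro i hi
          exact (Finset.mem_filter.mp hi).2
        linarith
      · intro x hx1 hx2
        apply idrFit_congr
        intro i
        constructor
        · intro hix
          by_contra hit
          push_neg at hit
          have hmemi : i ∈ Finset.univ.filter (fun i => t < y i) :=
            Finset.mem_filter.mpr ⟨Finset.mem_univ _, hit⟩
          have := Finset.inf'_le y hmemi
          linarith
        · intro hit; linarith
    · refine ⟨1, one_pos, ?_⟩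
      intro x hx1 _
      apply idrFit_congr
      intro i
      have hit : y i ≤ t := by
        by_contra hc
        push_neg at hc
        exact h ⟨i, Finset.mem_filter.mpr ⟨Finset.mem_univ _, hc⟩⟩
      constructor
      · intro _; exact hit
      · intro _; linarith
  -- Right continuity
  have hrc : ∀ t : ℝ, ContinuousWithinAt (idrFit y j) (Set.Ici t) t := by
    intro t
    obtain ⟨δ, hδ, hconst⟩ := hloc t
    have hmemN : Set.Ico t (t + δ) ∈ nhdsWithin t (Set.Ici t) :=
      Ico_mem_nhdsGE_of_mem (by constructor <;> [exact le_rfl; linarith])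
    have hev : (idrFit y j) =ᶠ[nhdsWithin t (Set.Ici t)] (fun _ => idrFit y j t) :=
      Filter.eventually_of_mem hmemN (fun x hx => hconst x hx.1 hx.2)
    have hc : ContinuousWithinAt (fun _ : ℝ => idrFit y j t) (Set.Ici t) t :=
      continuousWithinAt_const
    exact hc.congr_of_eventuallyEq hev rfl
  -- Finite range
  have hfin : (Set.range (idrFit y j)).Finite := by
    apply Set.Finite.subset (Set.finite_range (idrAuxF y j))
    rintro _ ⟨t, rfl⟩
    exact ⟨Finset.univ.filter (fun i => y i ≤ t), (idrFit_eq_aux y j t).symm⟩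
  refine ⟨hmono, hmem, hrc, hfin, ?_, ?_⟩
  -- zero below min
  · intro t ht
    have hall : ∀ i, ¬ y i ≤ t := by
      intro i hle
      have := Finset.inf'_le y (Finset.mem_univ i)
      linarith
    rw [idrFit_eq]
    have hterm : ∀ r s : Fin m, idrTerm y r s t = 0 := by
      intro r s
      unfold idrTerm
      rw [Finset.sum_eq_zero, zero_div]
      intro i _
      simp [hall i]
    have hsup : ∀ r ∈ Finset.Iic j,
        (Finset.Ici j).sup' ⟨j, Finset.mem_Ici.mpr le_rfl⟩ (fun s => idrTerm y r s t) = 0 := by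
      intro r _
      refine Eq.trans (Finset.sup'_congr _ rfl (fun s _ => hterm r s)) ?_
      exact Finset.sup'_const _ 0
    refine Eq.trans (Finset.inf'_congr _ rfl hsup) ?_
    exact Finset.inf'_const _ 0
  -- one above max
  · intro t ht
    have hall : ∀ i, y i ≤ t := fun i =>
      le_trans (Finset.le_sup' y (Finset.mem_univ i)) ht
    rw [idrFit_eq]
    have hterm : ∀ r s : Fin m, (r : ℕ) ≤ (s : ℕ) → idrTerm y r s t = 1 := by
      intro r s hrs
      unfold idrTerm
      have hone : ∀ i ∈ Finset.Icc r s, (if y i ≤ t then (1:ℝ) else 0) = 1 :=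
        fun i _ => by simp [hall i]
      have hsum : (∑ i ∈ Finset.Icc r s, if y i ≤ t then (1:ℝ) else 0)
          = ((Finset.Icc r s).card : ℝ) := by
        rw [Finset.sum_congr rfl hone, Finset.sum_const, nsmul_eq_mul, mul_one]
      rw [hsum, Fin.card_Icc]
      have hc : (s : ℕ) + 1 - (r : ℕ) = (s : ℕ) - (r : ℕ) + 1 := by omega
      rw [hc, div_self (idr_denom_pos r s).ne']
    have hsup : ∀ r ∈ Finset.Iic j,
        (Finset.Ici j).sup' ⟨j, Finset.mem_Ici.mpr le_rfl⟩ (fun s => idrTerm y r s t) = 1 := by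
      intro r hr
      have hr' : r ≤ j := Finset.mem_Iic.mp hr
      have : ∀ s ∈ Finset.Ici j, idrTerm y r s t = 1 := by
        intro s hs
        have hs' : j ≤ s := Finset.mem_Ici.mp hs
        exact hterm r s (le_trans hr' hs')
      refine Eq.trans (Finset.sup'_congr _ rfl this) ?_
      exact Finset.sup'_const _ 1
    refine Eq.trans (Finset.inf'_congr _ rfl hsup) ?_
    exact Finset.inf'_const _ 1
end

section
/- For a CDF F of a distribution with finite first moment and y ∈ ℝ, the CRPS is finite: ∫_ℝ (F(z) - 1{y ≤ z})² dz < ∞. -/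
open MeasureTheory
open scoped ENNReal

lemma swap_left (μ : Measure ℝ) [IsFiniteMeasure μ] (y : ℝ) :
    ∫⁻ z in Set.Iio y, μ (Set.Iic z) = ∫⁻ x, ENNReal.ofReal (y - x) ∂μ := by
  have hset : MeasurableSet {p : ℝ × ℝ | p.2 ≤ p.1} :=
    measurableSet_le measurable_snd measurable_fst
  have hmeas : AEMeasurable (Function.uncurry fun z x =>
      ({p : ℝ × ℝ | p.2 ≤ p.1}.indicator (1 : ℝ × ℝ → ℝ≥0∞) (z, x)))
      ((volume.restrict (Set.Iio y)).prod μ) := by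
    exact ((measurable_one.indicator hset).comp measurable_id).aemeasurable
  calc ∫⁻ z in Set.Iio y, μ (Set.Iic z)
      = ∫⁻ z in Set.Iio y, ∫⁻ x, {p : ℝ × ℝ | p.2 ≤ p.1}.indicator (1 : ℝ × ℝ → ℝ≥0∞) (z, x) ∂μ := by
        refine lintegral_congr fun z => ?_
        rw [← lintegral_indicator_one measurableSet_Iic]
        refine lintegral_congr fun x => ?_
        simp [Set.indicator_apply, Set.mem_Iic]
    _ = ∫⁻ x, ∫⁻ z in Set.Iio y, {p : ℝ × ℝ | p.2 ≤ p.1}.indicator (1 : ℝ × ℝ → ℝ≥0∞) (z, x) ∂volume ∂μ :=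
        lintegral_lintegral_swap hmeas
    _ = ∫⁻ x, ENNReal.ofReal (y - x) ∂μ := by
        refine lintegral_congr fun x => ?_
        have : ∀ z, {p : ℝ × ℝ | p.2 ≤ p.1}.indicator (1 : ℝ × ℝ → ℝ≥0∞) (z, x)
            = (Set.Ici x).indicator (1 : ℝ → ℝ≥0∞) z := by
          intro z; simp [Set.indicator_apply, Set.mem_Ici]
        simp_rw [this]
        rw [lintegral_indicator_one measurableSet_Ici, Measure.restrict_apply measurableSet_Ici,
          Set.Ici_inter_Iio, Real.volume_Ico]

lemma swap_right (μ : Measure ℝ) [IsFiniteMeasure μ] (y : ℝ) :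
    ∫⁻ z in Set.Ici y, μ (Set.Ioi z) = ∫⁻ x, ENNReal.ofReal (x - y) ∂μ := by
  have hset : MeasurableSet {p : ℝ × ℝ | p.1 < p.2} :=
    measurableSet_lt measurable_fst measurable_snd
  have hmeas : AEMeasurable (Function.uncurry fun z x =>
      ({p : ℝ × ℝ | p.1 < p.2}.indicator (1 : ℝ × ℝ → ℝ≥0∞) (z, x)))
      ((volume.restrict (Set.Ici y)).prod μ) := by
    exact ((measurable_one.indicator hset).comp measurable_id).aemeasurable
  calc ∫⁻ z in Set.Ici y, μ (Set.Ioi z)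
      = ∫⁻ z in Set.Ici y, ∫⁻ x, {p : ℝ × ℝ | p.1 < p.2}.indicator (1 : ℝ × ℝ → ℝ≥0∞) (z, x) ∂μ := by
        refine lintegral_congr fun z => ?_
        rw [← lintegral_indicator_one measurableSet_Ioi]
        refine lintegral_congr fun x => ?_
        simp [Set.indicator_apply, Set.mem_Ioi]
    _ = ∫⁻ x, ∫⁻ z in Set.Ici y, {p : ℝ × ℝ | p.1 < p.2}.indicator (1 : ℝ × ℝ → ℝ≥0∞) (z, x) ∂volume ∂μ :=
        lintegral_lintegral_swap hmeas
    _ = ∫⁻ x, ENNReal.ofReal (x - y) ∂μ := by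
        refine lintegral_congr fun x => ?_
        have : ∀ z, {p : ℝ × ℝ | p.1 < p.2}.indicator (1 : ℝ × ℝ → ℝ≥0∞) (z, x)
            = (Set.Iio x).indicator (1 : ℝ → ℝ≥0∞) z := by
          intro z; simp [Set.indicator_apply, Set.mem_Iio]
        simp_rw [this]
        rw [lintegral_indicator_one measurableSet_Iio, Measure.restrict_apply measurableSet_Iio,
          Set.Iio_inter_Ici, Real.volume_Ico]

lemma fin_aux (μ : Measure ℝ) [IsProbabilityMeasure μ] (hμ : Integrable id μ) (c : ℝ)
    (f : ℝ → ℝ) (hf : ∀ x, f x ≤ |c| + |x|) :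
    ∫⁻ x, ENNReal.ofReal (f x) ∂μ < ⊤ := by
  have hb : ∀ x, ENNReal.ofReal (f x) ≤ ENNReal.ofReal |c| + ENNReal.ofReal |x| := by
    intro x
    calc ENNReal.ofReal (f x) ≤ ENNReal.ofReal (|c| + |x|) := ENNReal.ofReal_le_ofReal (hf x)
      _ = ENNReal.ofReal |c| + ENNReal.ofReal |x| := ENNReal.ofReal_add (abs_nonneg c) (abs_nonneg x)
  calc ∫⁻ x, ENNReal.ofReal (f x) ∂μ
      ≤ ∫⁻ x, (ENNReal.ofReal |c| + ENNReal.ofReal |x|) ∂μ := lintegral_mono hb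
    _ = ENNReal.ofReal |c| * μ Set.univ + ∫⁻ x, ENNReal.ofReal |x| ∂μ := by
        rw [lintegral_add_left measurable_const, lintegral_const]
    _ < ⊤ := by
        have h1 : ∫⁻ x, ENNReal.ofReal |x| ∂μ < ⊤ := by
          have := hμ.hasFiniteIntegral
          simpa [HasFiniteIntegral, Real.enorm_eq_ofReal_abs] using this
        simp only [measure_univ, mul_one]
        exact ENNReal.add_lt_top.mpr ⟨ENNReal.ofReal_lt_top, h1⟩

/-- For the CDF F of a distribution with finite first moment and any y ∈ ℝ, the CRPS
∫ (F(z) - 1{y ≤ z})² dz is finite. -/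
theorem stmt_11 (μ : Measure ℝ) [IsProbabilityMeasure μ]
    (hμ : Integrable id μ)
    (F : ℝ → ℝ) (hF : ∀ z : ℝ, F z = (μ (Set.Iic z)).toReal) (y : ℝ) :
    (∫⁻ z : ℝ, ENNReal.ofReal ((F z - if y ≤ z then (1:ℝ) else 0)^2)) < ⊤ := by
  have hFin : ∀ z, μ (Set.Iic z) ≠ ⊤ := fun z => measure_ne_top μ _
  have hF0 : ∀ z, 0 ≤ F z := fun z => by rw [hF]; exact ENNReal.toReal_nonneg
  have hF1 : ∀ z, F z ≤ 1 := by
    intro z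
    rw [hF]
    have : μ (Set.Iic z) ≤ 1 := prob_le_one
    calc (μ (Set.Iic z)).toReal ≤ (1 : ℝ≥0∞).toReal :=
          ENNReal.toReal_mono ENNReal.one_ne_top this
      _ = 1 := by simp
  have hbound : ∀ z, ENNReal.ofReal ((F z - if y ≤ z then (1:ℝ) else 0)^2)
      ≤ if y ≤ z then μ (Set.Ioi z) else μ (Set.Iic z) := by
    intro z
    by_cases hz : y ≤ z
    · simp only [hz, if_true]
      have h1 : (F z - 1)^2 ≤ 1 - F z := by nlinarith [hF0 z, hF1 z]
      have h2 : ENNReal.ofReal (1 - F z) = μ (Set.Ioi z) := by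
        have hμIoi : μ (Set.Ioi z) = 1 - μ (Set.Iic z) := by
          rw [← Set.compl_Iic, measure_compl measurableSet_Iic (hFin z), measure_univ]
        rw [hμIoi, hF]
        rw [← ENNReal.ofReal_toReal (a := 1 - μ (Set.Iic z)) (by
          exact ne_top_of_le_ne_top ENNReal.one_ne_top tsub_le_self)]
        congr 1
        rw [ENNReal.toReal_sub_of_le prob_le_one ENNReal.one_ne_top]
        simp
      calc ENNReal.ofReal ((F z - 1)^2) ≤ ENNReal.ofReal (1 - F z) :=
            ENNReal.ofReal_le_ofReal h1
        _ = μ (Set.Ioi z) := h2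
    · simp only [hz, if_false]
      have h1 : (F z - 0)^2 ≤ F z := by nlinarith [hF0 z, hF1 z]
      calc ENNReal.ofReal ((F z - 0)^2) ≤ ENNReal.ofReal (F z) :=
            ENNReal.ofReal_le_ofReal h1
        _ = μ (Set.Iic z) := by rw [hF, ENNReal.ofReal_toReal (hFin z)]
  calc (∫⁻ z : ℝ, ENNReal.ofReal ((F z - if y ≤ z then (1:ℝ) else 0)^2))
      ≤ ∫⁻ z : ℝ, (if y ≤ z then μ (Set.Ioi z) else μ (Set.Iic z)) := lintegral_mono hbound
    _ = (∫⁻ z in Set.Ici y, (if y ≤ z then μ (Set.Ioi z) else μ (Set.Iic z)))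
        + ∫⁻ z in (Set.Ici y)ᶜ, (if y ≤ z then μ (Set.Ioi z) else μ (Set.Iic z)) :=
        (lintegral_add_compl _ measurableSet_Ici).symm
    _ = (∫⁻ z in Set.Ici y, μ (Set.Ioi z)) + ∫⁻ z in Set.Iio y, μ (Set.Iic z) := by
        rw [Set.compl_Ici]
        congr 1
        · refine setLIntegral_congr_fun measurableSet_Ici (fun z hz => ?_)
          rw [if_pos (Set.mem_Ici.mp hz)]
        · refine setLIntegral_congr_fun measurableSet_Iio (fun z hz => ?_)
          rw [if_neg (not_le.mpr (Set.mem_Iio.mp hz))]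
    _ = (∫⁻ x, ENNReal.ofReal (x - y) ∂μ) + ∫⁻ x, ENNReal.ofReal (y - x) ∂μ := by
        rw [swap_right, swap_left]
    _ < ⊤ := by
        refine ENNReal.add_lt_top.mpr ⟨?_, ?_⟩
        · exact fin_aux μ hμ y _ (fun x => by
            have := abs_sub_abs_le_abs_sub x y
            have h := abs_sub x y
            calc x - y ≤ |x - y| := le_abs_self _
              _ ≤ |x| + |y| := abs_sub _ _
              _ = |y| + |x| := add_comm _ _)
        · exact fin_aux μ hμ y _ (fun x => by
            calc y - x ≤ |y - x| := le_abs_self _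
              _ ≤ |y| + |x| := abs_sub _ _)
end

section
/- Propriety of the CRPS: if Y is a real random variable with CDF G having finite first moment, then for every CDF F with finite first moment, E[CRPS(F, Y)] ≥ E[CRPS(G, Y)]; indeed E[CRPS(F, Y)] - E[CRPS(G, Y)] = ∫_ℝ (F(z) - G(z))² dz. -/
open MeasureTheory

set_option linter.unusedSectionVars false
set_option linter.unusedVariables false

open Set ENNReal

section aux
variable (μ : Measure ℝ) [IsProbabilityMeasure μ]

lemma cdf_ofReal (z : ℝ) : ENNReal.ofReal (μ (Iic z)).toReal = μ (Iic z) :=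
  ENNReal.ofReal_toReal (measure_ne_top μ _)

lemma cdf_nonneg (z : ℝ) : 0 ≤ (μ (Iic z)).toReal := ENNReal.toReal_nonneg

lemma cdf_le_one (z : ℝ) : (μ (Iic z)).toReal ≤ 1 := by
  have := prob_le_one (μ := μ) (s := Iic z)
  simpa using ENNReal.toReal_mono one_ne_top this

lemma cdf_one_sub (z : ℝ) : ENNReal.ofReal (1 - (μ (Iic z)).toReal) = μ (Ioi z) := by
  have h : μ (Ioi z) = 1 - μ (Iic z) := by
    rw [← compl_Iic]
    rw [measure_compl measurableSet_Iic (measure_ne_top μ _), measure_univ]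
  rw [h, ENNReal.ofReal_sub _ ENNReal.toReal_nonneg, ENNReal.ofReal_one, cdf_ofReal]

lemma cdf_mono : Monotone (fun z => (μ (Iic z)).toReal) := fun a b hab =>
  ENNReal.toReal_mono (measure_ne_top μ _) (measure_mono (Iic_subset_Iic.2 hab))

lemma cdf_meas : Measurable (fun z => (μ (Iic z)).toReal) := (cdf_mono μ).measurable

lemma moment_neg (hμ : Integrable id μ) :
    ∫⁻ z in Iio (0:ℝ), μ (Iic z) < ∞ := by
  have swap : ∫⁻ z in Iio (0:ℝ), μ (Iic z)
      = ∫⁻ y, ENNReal.ofReal (-y) ∂μ := by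
    have h1 : ∀ z : ℝ, μ (Iic z) = ∫⁻ y, (Iic z).indicator (1:ℝ→ℝ≥0∞) y ∂μ := by
      intro z; rw [lintegral_indicator_one measurableSet_Iic]
    simp_rw [h1]
    rw [lintegral_lintegral_swap]
    · congr 1; ext y
      have : ∀ z : ℝ, (Iic z).indicator (1:ℝ→ℝ≥0∞) y
          = (Ici y).indicator (1:ℝ→ℝ≥0∞) z := by
        intro z
        by_cases h : y ≤ z <;> simp [h, indicator_apply]
      simp_rw [this]
      rw [lintegral_indicator (measurableSet_Ici)]
      simp [Measure.restrict_restrict, measurableSet_Ici, Ici_inter_Iio, Real.volume_Ico]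
    · have he : (Function.uncurry fun (z y : ℝ) => (Iic z).indicator (1:ℝ→ℝ≥0∞) y)
          = {q : ℝ × ℝ | q.2 ≤ q.1}.indicator (1:ℝ×ℝ→ℝ≥0∞) := by
        ext p
        by_cases h : p.2 ≤ p.1 <;> simp [Function.uncurry, indicator_apply, h]
      rw [he]
      exact (measurable_const.indicator (measurableSet_le measurable_snd measurable_fst)).aemeasurable
  rw [swap]
  calc ∫⁻ y, ENNReal.ofReal (-y) ∂μ ≤ ∫⁻ y, (‖y‖₊ : ℝ≥0∞) ∂μ := by
        apply lintegral_mono; intro y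
        calc ENNReal.ofReal (-y) ≤ ENNReal.ofReal |y| := ENNReal.ofReal_le_ofReal (neg_le_abs y)
        _ = ‖y‖₊ := (Real.enorm_eq_ofReal_abs y).symm
    _ < ∞ := hμ.2

lemma moment_pos (hμ : Integrable id μ) :
    ∫⁻ z in Ici (0:ℝ), μ (Ioi z) < ∞ := by
  have swap : ∫⁻ z in Ici (0:ℝ), μ (Ioi z)
      = ∫⁻ y, ENNReal.ofReal y ∂μ := by
    have h1 : ∀ z : ℝ, μ (Ioi z) = ∫⁻ y, (Ioi z).indicator (1:ℝ→ℝ≥0∞) y ∂μ := by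
      intro z; rw [lintegral_indicator_one measurableSet_Ioi]
    simp_rw [h1]
    rw [lintegral_lintegral_swap]
    · congr 1; ext y
      have : ∀ z : ℝ, (Ioi z).indicator (1:ℝ→ℝ≥0∞) y
          = (Iio y).indicator (1:ℝ→ℝ≥0∞) z := by
        intro z
        by_cases h : z < y <;> simp [h, indicator_apply]
      simp_rw [this]
      rw [lintegral_indicator (measurableSet_Iio)]
      simp [Measure.restrict_restrict, Iio_inter_Ici, Real.volume_Ico]
    · have he : (Function.uncurry fun (z y : ℝ) => (Ioi z).indicator (1:ℝ→ℝ≥0∞) y)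
          = {q : ℝ × ℝ | q.1 < q.2}.indicator (1:ℝ×ℝ→ℝ≥0∞) := by
        ext p
        by_cases h : p.1 < p.2 <;> simp [Function.uncurry, indicator_apply, h]
      rw [he]
      exact (measurable_const.indicator (measurableSet_lt measurable_fst measurable_snd)).aemeasurable
  rw [swap]
  calc ∫⁻ y, ENNReal.ofReal y ∂μ ≤ ∫⁻ y, (‖y‖₊ : ℝ≥0∞) ∂μ := by
        apply lintegral_mono; intro y
        exact Real.ofReal_le_enorm y
    _ < ∞ := hμ.2

lemma cdfE_meas : Measurable (fun z => μ (Iic z)) := by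
  have : (fun z => μ (Iic z)) = fun z => ENNReal.ofReal ((μ (Iic z)).toReal) := by
    ext z; rw [cdf_ofReal]
  rw [this]; exact ENNReal.measurable_ofReal.comp (cdf_meas μ)
lemma cdfE_meas' : Measurable (fun z => μ (Ioi z)) := by
  have : (fun z => μ (Ioi z)) = fun z => ENNReal.ofReal (1 - (μ (Iic z)).toReal) := by
    ext z; rw [cdf_one_sub]
  rw [this]; exact ENNReal.measurable_ofReal.comp (measurable_const.sub (cdf_meas μ))

-- the envelope function
noncomputable def env (z : ℝ) : ℝ≥0∞ := if z < 0 then μ (Iic z) else μ (Ioi z)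

lemma env_meas : Measurable (env μ) :=
  Measurable.ite measurableSet_Iio (cdfE_meas μ) (cdfE_meas' μ)

lemma env_fin (hμ : Integrable id μ) : ∫⁻ z, env μ z < ∞ := by
  rw [← lintegral_add_compl (env μ) (measurableSet_Iio (a := (0:ℝ)))]
  have h1 : ∫⁻ z in Iio (0:ℝ), env μ z = ∫⁻ z in Iio (0:ℝ), μ (Iic z) := by
    apply setLIntegral_congr_fun measurableSet_Iio
    exact fun z hz => if_pos hz
  have h2 : ∫⁻ z in (Iio (0:ℝ))ᶜ, env μ z = ∫⁻ z in Ici (0:ℝ), μ (Ioi z) := by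
    rw [compl_Iio]
    apply setLIntegral_congr_fun measurableSet_Ici
    exact fun z hz => if_neg (not_lt.2 hz)
  rw [h1, h2]
  exact ENNReal.add_lt_top.2 ⟨moment_neg μ hμ, moment_pos μ hμ⟩


end aux

section main
variable (μ ν : Measure ℝ) [IsProbabilityMeasure μ] [IsProbabilityMeasure ν]

-- pointwise-in-z computation of the y-lintegral
lemma pointY (z : ℝ) :
    ∫⁻ y, ENNReal.ofReal (((μ (Iic z)).toReal - if y ≤ z then (1:ℝ) else 0)^2) ∂ν
    = ENNReal.ofReal (((μ (Iic z)).toReal - (ν (Iic z)).toReal)^2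
        + (ν (Iic z)).toReal * (1 - (ν (Iic z)).toReal)) := by
  set F := (μ (Iic z)).toReal with hFdef
  set G := (ν (Iic z)).toReal with hGdef
  have hsplit : (fun y : ℝ => ENNReal.ofReal ((F - if y ≤ z then (1:ℝ) else 0)^2))
      = fun y => (Iic z).indicator (fun _ => ENNReal.ofReal ((F - 1)^2)) y
        + ((Iic z)ᶜ).indicator (fun _ => ENNReal.ofReal (F^2)) y := by
    ext y
    by_cases h : y ≤ z
    · simp [h, indicator_apply]
    · simp [h, indicator_apply, not_le.mp h]
  rw [hsplit, lintegral_add_left ((measurable_const.indicator measurableSet_Iic))]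
  rw [lintegral_indicator measurableSet_Iic, lintegral_indicator measurableSet_Iic.compl]
  simp only [setLIntegral_const, compl_Iic]
  have h1 : (ν (Iic z)) = ENNReal.ofReal G := (cdf_ofReal ν z).symm
  have h2 : (ν (Ioi z)) = ENNReal.ofReal (1 - G) := (cdf_one_sub ν z).symm
  rw [h1, h2, ← ENNReal.ofReal_mul (by positivity), ← ENNReal.ofReal_mul (by positivity),
    ← ENNReal.ofReal_add (by positivity) ?_]
  · congr 1; ring
  · have := cdf_le_one ν z
    have := cdf_nonneg ν z
    have h3 : (0:ℝ) ≤ 1 - G := by rw [hGdef]; linarith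
    positivity

-- joint measurability
lemma joint_meas : Measurable fun p : ℝ × ℝ =>
    ENNReal.ofReal (((μ (Iic p.2)).toReal - if p.1 ≤ p.2 then (1:ℝ) else 0)^2) := by
  have hind : Measurable fun p : ℝ × ℝ => (if p.1 ≤ p.2 then (1:ℝ) else 0) := by
    have : (fun p : ℝ × ℝ => (if p.1 ≤ p.2 then (1:ℝ) else 0))
        = {q : ℝ × ℝ | q.1 ≤ q.2}.indicator 1 := by
      ext p; by_cases h : p.1 ≤ p.2 <;> simp [h, indicator_apply]
    rw [this]
    exact measurable_const.indicator (measurableSet_le measurable_fst measurable_snd)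
  exact ENNReal.measurable_ofReal.comp
    ((((cdf_meas μ).comp measurable_snd).sub hind).pow_const 2)

-- swap & compute
lemma swapL :
    ∫⁻ y, (∫⁻ z, ENNReal.ofReal (((μ (Iic z)).toReal - if y ≤ z then (1:ℝ) else 0)^2)) ∂ν
    = ∫⁻ z, ENNReal.ofReal (((μ (Iic z)).toReal - (ν (Iic z)).toReal)^2
        + (ν (Iic z)).toReal * (1 - (ν (Iic z)).toReal)) := by
  rw [lintegral_lintegral_swap (joint_meas μ).aemeasurable]
  exact lintegral_congr fun z => pointY μ ν z

-- finiteness of the key integral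
lemma finKey (hμ : Integrable id μ) (hν : Integrable id ν) :
    ∫⁻ z, ENNReal.ofReal (((μ (Iic z)).toReal - (ν (Iic z)).toReal)^2
        + (ν (Iic z)).toReal * (1 - (ν (Iic z)).toReal)) < ∞ := by
  have hb : ∀ z : ℝ, ENNReal.ofReal (((μ (Iic z)).toReal - (ν (Iic z)).toReal)^2
        + (ν (Iic z)).toReal * (1 - (ν (Iic z)).toReal)) ≤ env μ z + 2 * env ν z := by
    intro z
    set F := (μ (Iic z)).toReal with hFd
    set G := (ν (Iic z)).toReal with hGd
    have hF0 : 0 ≤ F := cdf_nonneg μ z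
    have hF1 : F ≤ 1 := cdf_le_one μ z
    have hG0 : 0 ≤ G := cdf_nonneg ν z
    have hG1 : G ≤ 1 := cdf_le_one ν z
    by_cases hz : z < 0
    · have hreal : (F - G)^2 + G * (1 - G) ≤ F + 2 * G := by nlinarith
      calc ENNReal.ofReal ((F - G)^2 + G * (1-G)) ≤ ENNReal.ofReal (F + 2*G) :=
            ENNReal.ofReal_le_ofReal hreal
        _ = ENNReal.ofReal F + 2 * ENNReal.ofReal G := by
            rw [ENNReal.ofReal_add hF0 (by positivity), ENNReal.ofReal_mul (by norm_num)]
            norm_num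
        _ = env μ z + 2 * env ν z := by
            simp only [env, if_pos hz]
            rw [hFd, hGd, cdf_ofReal, cdf_ofReal]
    · have hreal : (F - G)^2 + G * (1 - G) ≤ (1 - F) + 2 * (1 - G) := by nlinarith
      calc ENNReal.ofReal ((F - G)^2 + G * (1-G)) ≤ ENNReal.ofReal ((1-F) + 2*(1-G)) :=
            ENNReal.ofReal_le_ofReal hreal
        _ = ENNReal.ofReal (1-F) + 2 * ENNReal.ofReal (1-G) := by
            rw [ENNReal.ofReal_add (by linarith) (by linarith), ENNReal.ofReal_mul (by norm_num)]
            norm_num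
        _ = env μ z + 2 * env ν z := by
            simp only [env, if_neg hz]
            rw [hFd, hGd, cdf_one_sub, cdf_one_sub]
  calc ∫⁻ z, ENNReal.ofReal _ ≤ ∫⁻ z, (env μ z + 2 * env ν z) := lintegral_mono hb
    _ = (∫⁻ z, env μ z) + 2 * ∫⁻ z, env ν z := by
        rw [lintegral_add_left (env_meas μ), lintegral_const_mul _ (env_meas ν)]
    _ < ∞ := by
        have h1 := env_fin μ hμ
        have h2 := env_fin ν hν
        exact ENNReal.add_lt_top.2 ⟨h1, ENNReal.mul_lt_top (by norm_num) h2⟩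

-- per-y finiteness
lemma finY (hμ : Integrable id μ) (y : ℝ) :
    ∫⁻ z, ENNReal.ofReal (((μ (Iic z)).toReal - if y ≤ z then (1:ℝ) else 0)^2) < ∞ := by
  have hb : ∀ z : ℝ, ENNReal.ofReal (((μ (Iic z)).toReal - if y ≤ z then (1:ℝ) else 0)^2)
      ≤ env μ z + (Icc (min y 0) (max y 0)).indicator (1 : ℝ → ℝ≥0∞) z := by
    intro z
    set F := (μ (Iic z)).toReal with hFd
    have hF0 : 0 ≤ F := cdf_nonneg μ z
    have hF1 : F ≤ 1 := cdf_le_one μ z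
    by_cases hz : z < 0 <;> by_cases hy : y ≤ z
    · -- z < 0, y ≤ z : bound by indicator = 1
      have hz' : z ∈ Icc (min y 0) (max y 0) :=
        ⟨le_trans (min_le_left _ _) hy, le_trans hz.le (le_max_right _ _)⟩
      calc ENNReal.ofReal ((F - if y ≤ z then (1:ℝ) else 0)^2)
          = ENNReal.ofReal ((F - 1)^2) := by rw [if_pos hy]
        _ ≤ 1 := by
            rw [← ENNReal.ofReal_one]; exact ENNReal.ofReal_le_ofReal (by nlinarith)
        _ ≤ env μ z + (Icc (min y 0) (max y 0)).indicator (1 : ℝ → ℝ≥0∞) z := by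
            rw [indicator_of_mem hz', Pi.one_apply]; exact le_add_self
    · -- z < 0, z < y : bound by F ≤ env
      calc ENNReal.ofReal ((F - if y ≤ z then (1:ℝ) else 0)^2)
          = ENNReal.ofReal ((F - 0)^2) := by rw [if_neg hy]
        _ ≤ env μ z := by
            simp only [env, if_pos hz]
            calc ENNReal.ofReal ((F - 0)^2) ≤ ENNReal.ofReal F :=
                  ENNReal.ofReal_le_ofReal (by nlinarith)
              _ = μ (Iic z) := by rw [hFd, cdf_ofReal]
        _ ≤ _ := le_self_add
    · -- z ≥ 0, y ≤ z : bound by 1 - F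
      calc ENNReal.ofReal ((F - if y ≤ z then (1:ℝ) else 0)^2)
          = ENNReal.ofReal ((F - 1)^2) := by rw [if_pos hy]
        _ ≤ env μ z := by
            simp only [env, if_neg hz]
            calc ENNReal.ofReal ((F - 1)^2) ≤ ENNReal.ofReal (1 - F) :=
                  ENNReal.ofReal_le_ofReal (by nlinarith)
              _ = μ (Ioi z) := by rw [hFd, cdf_one_sub]
        _ ≤ _ := le_self_add
    · -- z ≥ 0, z < y : indicator
      have hz' : z ∈ Icc (min y 0) (max y 0) :=
        ⟨le_trans (min_le_right _ _) (not_lt.1 hz), le_trans (not_le.1 hy).le (le_max_left _ _)⟩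
      calc ENNReal.ofReal ((F - if y ≤ z then (1:ℝ) else 0)^2)
          = ENNReal.ofReal ((F - 0)^2) := by rw [if_neg hy]
        _ ≤ 1 := by
            rw [← ENNReal.ofReal_one]; exact ENNReal.ofReal_le_ofReal (by nlinarith)
        _ ≤ env μ z + (Icc (min y 0) (max y 0)).indicator (1 : ℝ → ℝ≥0∞) z := by
            rw [indicator_of_mem hz', Pi.one_apply]; exact le_add_self
  calc ∫⁻ z, ENNReal.ofReal _
      ≤ ∫⁻ z, (env μ z + (Icc (min y 0) (max y 0)).indicator (1 : ℝ → ℝ≥0∞) z) :=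
        lintegral_mono hb
    _ = (∫⁻ z, env μ z) + volume (Icc (min y 0) (max y 0)) := by
        rw [lintegral_add_left (env_meas μ), lintegral_indicator_one measurableSet_Icc]
    _ < ∞ := ENNReal.add_lt_top.2 ⟨env_fin μ hμ, measure_Icc_lt_top⟩

end main

section conv
variable (μ ν : Measure ℝ) [IsProbabilityMeasure μ] [IsProbabilityMeasure ν]

lemma crps_eq (hμ : Integrable id μ) :
    ∫ y, (∫ z, ((μ (Iic z)).toReal - if y ≤ z then (1:ℝ) else 0)^2) ∂ν
    = (∫⁻ z, ENNReal.ofReal (((μ (Iic z)).toReal - (ν (Iic z)).toReal)^2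
        + (ν (Iic z)).toReal * (1 - (ν (Iic z)).toReal))).toReal := by
  have hmz : ∀ y : ℝ, AEStronglyMeasurable
      (fun z => ((μ (Iic z)).toReal - if y ≤ z then (1:ℝ) else 0)^2) volume := by
    intro y
    have hind : Measurable fun z : ℝ => (if y ≤ z then (1:ℝ) else 0) := by
      have : (fun z : ℝ => (if y ≤ z then (1:ℝ) else 0)) = (Ici y).indicator 1 := by
        ext z; by_cases h : y ≤ z <;> simp [h]
      rw [this]; exact measurable_const.indicator measurableSet_Ici
    exact (((cdf_meas μ).sub hind).pow_const 2).aestronglyMeasurable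
  have step1 : ∀ y : ℝ, (∫ z, ((μ (Iic z)).toReal - if y ≤ z then (1:ℝ) else 0)^2)
      = (∫⁻ z, ENNReal.ofReal (((μ (Iic z)).toReal - if y ≤ z then (1:ℝ) else 0)^2)).toReal := by
    intro y
    rw [integral_eq_lintegral_of_nonneg_ae (ae_of_all _ fun z => sq_nonneg _) (hmz y)]
  simp_rw [step1]
  rw [integral_toReal ((Measurable.lintegral_prod_right' (joint_meas μ)).aemeasurable)
    (ae_of_all _ fun y => finY μ hμ y), swapL μ ν]

end conv

/-- Propriety of the CRPS: if Y has CDF G (law ν) with finite first moment, then for every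
CDF F (of a law μ) with finite first moment,
E[CRPS(F,Y)] - E[CRPS(G,Y)] = ∫ (F(z) - G(z))² dz, and hence E[CRPS(G,Y)] ≤ E[CRPS(F,Y)]. -/
theorem stmt_12 (μ ν : Measure ℝ) [IsProbabilityMeasure μ] [IsProbabilityMeasure ν]
    (hμ : Integrable id μ) (hν : Integrable id ν)
    (F G : ℝ → ℝ) (hF : ∀ z : ℝ, F z = (μ (Set.Iic z)).toReal)
    (hG : ∀ z : ℝ, G z = (ν (Set.Iic z)).toReal) :
    ((∫ y, (∫ z : ℝ, (F z - if y ≤ z then (1:ℝ) else 0)^2) ∂ν) -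
      ∫ y, (∫ z : ℝ, (G z - if y ≤ z then (1:ℝ) else 0)^2) ∂ν)
      = (∫ z : ℝ, (F z - G z)^2) ∧
    (∫ y, (∫ z : ℝ, (G z - if y ≤ z then (1:ℝ) else 0)^2) ∂ν) ≤
      ∫ y, (∫ z : ℝ, (F z - if y ≤ z then (1:ℝ) else 0)^2) ∂ν := by
  simp only [hF, hG]
  set D := ∫⁻ z, ENNReal.ofReal (((μ (Iic z)).toReal - (ν (Iic z)).toReal)^2) with hD
  set K := ∫⁻ z, ENNReal.ofReal ((ν (Iic z)).toReal * (1 - (ν (Iic z)).toReal)) with hK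
  have hmD : Measurable fun z => ENNReal.ofReal (((μ (Iic z)).toReal - (ν (Iic z)).toReal)^2) :=
    ENNReal.measurable_ofReal.comp (((cdf_meas μ).sub (cdf_meas ν)).pow_const 2)
  have hLsplit : (∫⁻ z, ENNReal.ofReal (((μ (Iic z)).toReal - (ν (Iic z)).toReal)^2
      + (ν (Iic z)).toReal * (1 - (ν (Iic z)).toReal))) = D + K := by
    rw [hD, hK, ← lintegral_add_left hmD]
    apply lintegral_congr fun z => ?_
    rw [ENNReal.ofReal_add (sq_nonneg _) ?_]
    have h1 := cdf_nonneg ν z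
    have h2 := cdf_le_one ν z
    exact mul_nonneg h1 (by linarith)
  have hAF := crps_eq μ ν hμ
  have hAG := crps_eq ν ν hν
  have hAG' : (∫ y, (∫ z, ((ν (Iic z)).toReal - if y ≤ z then (1:ℝ) else 0)^2) ∂ν)
      = K.toReal := by
    rw [hAG, hK]
    congr 1
    apply lintegral_congr fun z => ?_
    rw [sub_self, zero_pow (by norm_num), zero_add]
  have hLfin : D + K < ∞ := by rw [← hLsplit]; exact finKey μ ν hμ hν
  have hDfin : D ≠ ∞ := (lt_of_le_of_lt le_self_add hLfin).ne
  have hKfin : K ≠ ∞ := (lt_of_le_of_lt le_add_self hLfin).ne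
  have hintD : (∫ z : ℝ, (((μ (Iic z)).toReal - (ν (Iic z)).toReal))^2) = D.toReal := by
    rw [hD, integral_eq_lintegral_of_nonneg_ae
      (f := fun z => ((μ (Iic z)).toReal - (ν (Iic z)).toReal)^2) (ae_of_all _ fun z => sq_nonneg _)
      ((((cdf_meas μ).sub (cdf_meas ν)).pow_const 2).aestronglyMeasurable)]
  constructor
  · rw [hAF, hAG', hLsplit, hintD, ENNReal.toReal_add hDfin hKfin]
    ring
  · rw [hAF, hAG', hLsplit]
    exact ENNReal.toReal_mono (by simp [ENNReal.add_eq_top, hDfin, hKfin]) le_add_self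
end
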